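/- Let F be a field of characteristic 0 containing a primitive n-th root of unity for every n ≥ 1, with algebraic closure F̄, and fix an injective group homomorphism ι : μ∞ → S¹ from the roots of unity of F̄ into the circle group. Then the space X_{F̄} = {χ : F̄ˣ → S¹ group homomorphism with χ|_{μ∞} = ι}, with the topology of pointwise convergence, is a nonempty, compact, Hausdorff and connected topological space; the action of Gal(F̄/F) on X_{F̄} given by σ · χ = χ ∘ σ⁻¹ is free; and the quotient space X_F = Gal(F̄/F)\X_{F̄} is a nonempty, connected, compact Hausdorff space. -/

import Mathlib

open scoped Classical

noncomputable section

/-- The space of characters `F̄ˣ → S¹` with the topology of pointwise convergence. -/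
instance charTopology (Fbar : Type*) [Field Fbar] : TopologicalSpace (Fbarˣ →* Circle) :=
  TopologicalSpace.induced (fun χ => (χ : Fbarˣ → Circle)) inferInstance

/-- The space `X_F̄` of characters `χ : F̄ˣ → S¹` restricting to `ι` on the roots of
unity, with the topology of pointwise convergence. -/
def XChar (Fbar : Type*) [Field Fbar] (ι : (CommGroup.torsion Fbarˣ) →* Circle) : Type _ :=
  {χ : Fbarˣ →* Circle // ∀ ζ : CommGroup.torsion Fbarˣ, χ ζ = ι ζ}

instance (Fbar : Type*) [Field Fbar] (ι : (CommGroup.torsion Fbarˣ) →* Circle) :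
    TopologicalSpace (XChar Fbar ι) :=
  instTopologicalSpaceSubtype

/-- The setoid on `X_F̄` whose classes are the orbits of `Gal(F̄/K)` acting by
`σ • χ = χ ∘ σ⁻¹`. -/
def galSetoid (K : Type*) (Fbar : Type*) [Field Fbar] [CommSemiring K] [Algebra K Fbar]
    (ι : (CommGroup.torsion Fbarˣ) →* Circle) : Setoid (XChar Fbar ι) where
  r χ₁ χ₂ := ∃ σ : Fbar ≃ₐ[K] Fbar, ∀ x : Fbarˣ,
    χ₂.1 x = χ₁.1 (Units.map (σ : Fbar →* Fbar) x)
  iseqv := by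
    constructor
    · intro χ
      refine ⟨1, fun x => ?_⟩
      have h1 : Units.map ((1 : Fbar ≃ₐ[K] Fbar) : Fbar →* Fbar) x = x := by
        ext; simp
      rw [h1]
    · rintro χ₁ χ₂ ⟨σ, h⟩
      refine ⟨σ.symm, fun x => ?_⟩
      have h1 : Units.map (σ : Fbar →* Fbar) (Units.map (σ.symm : Fbar →* Fbar) x) = x := by
        ext; simp
      rw [h (Units.map (σ.symm : Fbar →* Fbar) x), h1]
    · rintro χ₁ χ₂ χ₃ ⟨σ, h⟩ ⟨τ, h'⟩
      refine ⟨τ.trans σ, fun x => ?_⟩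
      have h1 : Units.map ((τ.trans σ : Fbar ≃ₐ[K] Fbar) : Fbar →* Fbar) x
          = Units.map (σ : Fbar →* Fbar) (Units.map (τ : Fbar →* Fbar) x) := by
        ext; simp
      rw [h' x, h (Units.map (τ : Fbar →* Fbar) x), h1]

/-- The quotient `X_K = Gal(F̄/K)\X_F̄`, with the quotient topology. -/
def XF (K : Type*) (Fbar : Type*) [Field Fbar] [CommSemiring K] [Algebra K Fbar]
    (ι : (CommGroup.torsion Fbarˣ) →* Circle) : Type _ :=
  Quotient (galSetoid K Fbar ι)

instance (K : Type*) (Fbar : Type*) [Field Fbar] [CommSemiring K] [Algebra K Fbar]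
    (ι : (CommGroup.torsion Fbarˣ) →* Circle) : TopologicalSpace (XF K Fbar ι) :=
  instTopologicalSpaceQuotient


/-! ### Auxiliary material -/

open IntermediateField Topology

instance : DivisibleBy (Additive Circle) ℤ where
  div z n := Circle.expHom ((Complex.arg (z.toMul : Circle) : ℝ) / (n : ℝ))
  div_zero z := by simp
  div_cancel {n} z h := by
    rw [← map_zsmul Circle.expHom, zsmul_eq_mul, mul_div_cancel₀ _ (by exact_mod_cast h)]
    show Additive.ofMul (Circle.exp _) = z
    rw [Circle.exp_arg]; rfl

theorem exists_monoidHom_extension {G : Type*} [CommGroup G] (H : Subgroup G)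
    (f : H →* Circle) : ∃ g : G →* Circle, ∀ h : H, g h = f h := by
  have hBaer : Module.Baer ℤ (Additive Circle) := Module.Baer.of_divisible _
  have hinj : Module.Injective ℤ (ULift (Additive Circle)) :=
    Module.ulift_injective_of_injective ℤ hBaer.injective
  let i : Additive H →ₗ[ℤ] Additive G :=
    (MonoidHom.toAdditive H.subtype).toIntLinearMap
  have hi : Function.Injective i := fun a b hab => by
    have : (a.toMul : G) = (b.toMul : G) := hab
    exact Subtype.val_injective this
  obtain ⟨g', hg'⟩ := hinj.out i hi
    (ULift.moduleEquiv.symm.toLinearMap ∘ₗ (MonoidHom.toAdditive f).toIntLinearMap)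
  refine ⟨MonoidHom.toAdditive.symm (ULift.moduleEquiv.toLinearMap ∘ₗ g').toAddMonoidHom, fun h => ?_⟩
  have := hg' (Additive.ofMul h)
  have := congrArg ULift.down this
  exact this



section CharSpace
variable {Fbar : Type*} [Field Fbar]

lemma charCoe_isClosedEmbedding :
    IsClosedEmbedding ((⇑·) : (Fbarˣ →* Circle) → (Fbarˣ → Circle)) := by
  refine ⟨⟨⟨rfl⟩, fun a b hab => DFunLike.coe_injective hab⟩, ?_⟩
  have hr : Set.range ((⇑·) : (Fbarˣ →* Circle) → (Fbarˣ → Circle)) =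
      {f : Fbarˣ → Circle | f 1 = 1 ∧ ∀ x y, f (x * y) = f x * f y} := by
    ext f
    constructor
    · rintro ⟨χ, rfl⟩; exact ⟨χ.map_one, χ.map_mul⟩
    · rintro ⟨h1, hmul⟩; exact ⟨⟨⟨f, h1⟩, hmul⟩, rfl⟩
  rw [hr]
  have h1 : IsClosed {f : Fbarˣ → Circle | f 1 = 1} :=
    isClosed_eq (continuous_apply 1) continuous_const
  have h2 : IsClosed {f : Fbarˣ → Circle | ∀ x y, f (x * y) = f x * f y} := by
    have : {f : Fbarˣ → Circle | ∀ x y, f (x * y) = f x * f y} =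
        ⋂ (x : Fbarˣ) (y : Fbarˣ), {f : Fbarˣ → Circle | f (x * y) = f x * f y} := by
      ext f; simp
    rw [this]
    exact isClosed_iInter fun x => isClosed_iInter fun y =>
      isClosed_eq (continuous_apply _) ((continuous_apply x).mul (continuous_apply y))
  exact h1.inter h2

lemma charCoe_continuous : Continuous ((⇑·) : (Fbarˣ →* Circle) → (Fbarˣ → Circle)) :=
  charCoe_isClosedEmbedding.continuous

lemma charEval_continuous (x : Fbarˣ) :
    Continuous (fun χ : Fbarˣ →* Circle => χ x) :=
  (continuous_apply x).comp charCoe_continuous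

instance : T2Space (Fbarˣ →* Circle) := charCoe_isClosedEmbedding.isEmbedding.t2Space

instance : CompactSpace (Fbarˣ →* Circle) := charCoe_isClosedEmbedding.compactSpace

instance : IsTopologicalGroup (Fbarˣ →* Circle) where
  continuous_mul := by
    apply continuous_induced_rng.2
    exact continuous_pi fun x => ((charEval_continuous x).comp continuous_fst).mul
      ((charEval_continuous x).comp continuous_snd)
  continuous_inv := by
    apply continuous_induced_rng.2
    exact continuous_pi fun x => ((charEval_continuous x).comp continuous_id).inv



end CharSpace



theorem preconnectedSpace_of_clopen {X : Type*} [TopologicalSpace X]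
    (h : ∀ s : Set X, IsClopen s → s.Nonempty → s = Set.univ) : PreconnectedSpace X := by
  constructor
  rw [isPreconnected_iff_subset_of_disjoint]
  intro u v hu hv hcov hdisj
  rcases Set.eq_empty_or_nonempty u with hue | hune
  · right; intro x _; rcases hcov (Set.mem_univ x) with h' | h'
    · exact absurd h' (by simp [hue])
    · exact h'
  · left
    have huv : u = vᶜ := by
      apply Set.eq_of_subset_of_subset
      · intro x hx hxv
        exact Set.eq_empty_iff_forall_notMem.mp hdisj x ⟨Set.mem_univ x, hx, hxv⟩
      · intro x hx
        rcases hcov (Set.mem_univ x) with h' | h'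
        · exact h'
        · exact absurd h' hx
    have : IsClopen u := ⟨by rw [huv]; exact hv.isClosed_compl, hu⟩
    rw [h u this hune]

theorem preconnectedSpace_of_divisible {G : Type*} [CommGroup G] [TopologicalSpace G]
    [IsTopologicalGroup G] [CompactSpace G]
    (hdiv : ∀ n : ℕ, 0 < n → ∀ g : G, ∃ h : G, h ^ n = g) : PreconnectedSpace G := by
  have key : ∀ W : Set G, IsClopen W → (1 : G) ∈ W → W = Set.univ := by
    intro W hW h1W
    obtain ⟨H, hH⟩ := IsTopologicalGroup.exist_openNormalSubgroup_sub_clopen_nhds_of_one hW h1W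
    have hfin : Finite (G ⧸ H.toSubgroup) :=
      H.toSubgroup.quotient_finite_of_isOpen H.isOpen
    have hcard : 0 < Nat.card (G ⧸ H.toSubgroup) := Nat.card_pos
    have hall : ∀ g : G, g ∈ H.toSubgroup := by
      intro g
      obtain ⟨k, rfl⟩ := hdiv (Nat.card (G ⧸ H.toSubgroup)) hcard g
      have : ((k : G) : G ⧸ H.toSubgroup) ^ Nat.card (G ⧸ H.toSubgroup) = 1 :=
        pow_card_eq_one'
      rw [← QuotientGroup.mk_pow] at this
      exact (QuotientGroup.eq_one_iff _).mp this
    exact Set.eq_univ_of_univ_subset (fun g _ => hH (hall g))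
  apply preconnectedSpace_of_clopen
  intro s hs ⟨g, hg⟩
  have hW : IsClopen ((fun x => g * x) ⁻¹' s) :=
    hs.preimage (continuous_mul_left g)
  have h1W : (1 : G) ∈ (fun x => g * x) ⁻¹' s := by simpa using hg
  have := key _ hW h1W
  apply Set.eq_univ_of_forall
  intro y
  have : g * (g⁻¹ * y) ∈ s := by
    have := Set.eq_univ_iff_forall.mp this (g⁻¹ * y)
    exact this
  simpa using this



section Div
variable {Fbar : Type*} [Field Fbar]



def torKer (Fbar : Type*) [Field Fbar] : Subgroup (Fbarˣ →* Circle) where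
  carrier := {ψ | ∀ ζ : CommGroup.torsion Fbarˣ, ψ ζ = 1}
  one_mem' := fun ζ => rfl
  mul_mem' {a b} ha hb := fun ζ => by
    show a ζ * b ζ = 1
    rw [ha ζ, hb ζ, mul_one]
  inv_mem' {a} ha := fun ζ => by
    show (a ζ)⁻¹ = 1
    rw [ha ζ, inv_one]

lemma torKer_killsTor {ψ : Fbarˣ →* Circle} (hψ : ψ ∈ torKer Fbar)
    {x : Fbarˣ} {m : ℕ} (hm : 0 < m) (hx : x ^ m = 1) : ψ x = 1 := by
  have hfin : IsOfFinOrder x := isOfFinOrder_iff_pow_eq_one.mpr ⟨m, hm, hx⟩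
  exact hψ ⟨x, (CommGroup.mem_torsion x).mpr hfin⟩

lemma torKer_divisible [IsAlgClosed Fbar] (n : ℕ) (hn : 0 < n) (ψ : torKer Fbar) :
    ∃ φ : torKer Fbar, φ ^ n = ψ := by
  have hex : ∀ y : Fbarˣ, ∃ z : Fbarˣ, z ^ n = y := by
    intro y
    obtain ⟨z, hz⟩ := IsAlgClosed.exists_pow_nat_eq (y : Fbar) hn
    have hz0 : z ≠ 0 := by
      intro h
      rw [h, zero_pow hn.ne'] at hz
      exact y.ne_zero hz.symm
    refine ⟨Units.mk0 z hz0, ?_⟩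
    ext
    simpa using hz
  choose ρ hρ using hex
  have hone : ψ.1 (ρ 1) = 1 := torKer_killsTor ψ.2 hn (hρ 1)
  refine ⟨⟨{ toFun := fun y => ψ.1 (ρ y)
             map_one' := hone
             map_mul' := ?_ }, ?_⟩, ?_⟩
  · intro a b
    have hu : (ρ (a * b) * (ρ a * ρ b)⁻¹) ^ n = 1 := by
      rw [mul_pow, inv_pow, mul_pow, hρ, hρ, hρ, mul_inv_cancel]
    have := torKer_killsTor ψ.2 hn hu
    have h2 : ψ.1 (ρ (a * b)) = ψ.1 (ρ (a*b) * (ρ a * ρ b)⁻¹) * ψ.1 (ρ a * ρ b) := by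
      rw [← map_mul]
      congr 1
      group
    show ψ.1 (ρ (a*b)) = ψ.1 (ρ a) * ψ.1 (ρ b)
    rw [h2, this, one_mul, map_mul]
  · intro ζ
    obtain ⟨m, hm, hζm⟩ := isOfFinOrder_iff_pow_eq_one.mp ((CommGroup.mem_torsion _).mp ζ.2)
    show ψ.1 (ρ ζ) = 1
    have : (ρ ζ) ^ (n * m) = 1 := by
      rw [pow_mul, hρ, hζm]
    exact torKer_killsTor ψ.2 (Nat.mul_pos hn hm) this
  · refine Subtype.ext (MonoidHom.ext fun x => ?_)
    show (ψ.1 (ρ x)) ^ n = ψ.1 x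
    rw [← map_pow, hρ]


end Div

section XC
variable {Fbar : Type*} [Field Fbar] (ι : (CommGroup.torsion Fbarˣ) →* Circle)

lemma xcharSet_isClosed :
    IsClosed {χ : Fbarˣ →* Circle | ∀ ζ : CommGroup.torsion Fbarˣ, χ ζ = ι ζ} := by
  have h : {χ : Fbarˣ →* Circle | ∀ ζ : CommGroup.torsion Fbarˣ, χ ζ = ι ζ} =
      ⋂ ζ : CommGroup.torsion Fbarˣ, {χ : Fbarˣ →* Circle | χ ζ = ι ζ} := by ext; simp
  rw [h]
  exact isClosed_iInter fun ζ => isClosed_eq (charEval_continuous _) continuous_const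

instance : T2Space (XChar Fbar ι) :=
  inferInstanceAs (T2Space {χ : Fbarˣ →* Circle // ∀ ζ : CommGroup.torsion Fbarˣ, χ ζ = ι ζ})

instance : CompactSpace (XChar Fbar ι) := by
  have h := (xcharSet_isClosed ι).isCompact
  rw [isCompact_iff_compactSpace] at h
  exact h

lemma torKer_mem_iff (ψ : Fbarˣ →* Circle) :
    ψ ∈ torKer Fbar ↔ ∀ ζ : CommGroup.torsion Fbarˣ, ψ ζ = 1 := Iff.rfl

instance : CompactSpace (torKer Fbar) := by
  have heq : (torKer Fbar : Set (Fbarˣ →* Circle)) =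
      ⋂ ζ : CommGroup.torsion Fbarˣ, {ψ : Fbarˣ →* Circle | ψ ζ = 1} := by
    ext ψ
    simp only [SetLike.mem_coe, torKer_mem_iff, Set.mem_iInter, Set.mem_setOf_eq]
  have h : IsClosed (torKer Fbar : Set (Fbarˣ →* Circle)) := by
    rw [heq]
    exact isClosed_iInter fun ζ => isClosed_eq (charEval_continuous _) continuous_const
  exact isCompact_iff_compactSpace.mp h.isCompact

lemma connectedSpace_xchar [IsAlgClosed Fbar] (hne : Nonempty (XChar Fbar ι)) :
    ConnectedSpace (XChar Fbar ι) := by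
  obtain ⟨χ₀⟩ := hne
  have hpre : PreconnectedSpace (torKer Fbar) :=
    preconnectedSpace_of_divisible (fun n hn g => torKer_divisible n hn g)
  have hconn : ConnectedSpace (torKer Fbar) := ⟨⟨1⟩⟩
  set m : torKer Fbar → XChar Fbar ι := fun ψ =>
    ⟨χ₀.1 * ψ.1, fun ζ => by
      show χ₀.1 ζ * ψ.1 ζ = ι ζ
      rw [(torKer_mem_iff ψ.1).mp ψ.2 ζ, mul_one, χ₀.2]⟩ with hm
  have hcont : Continuous m := by
    apply Continuous.subtype_mk
    exact continuous_const.mul continuous_subtype_val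
  have hsurj : Function.Surjective m := by
    intro χ
    refine ⟨⟨χ₀.1⁻¹ * χ.1, (torKer_mem_iff _).mpr fun ζ => ?_⟩, ?_⟩
    · show (χ₀.1 ζ)⁻¹ * χ.1 ζ = 1
      rw [χ₀.2 ζ, χ.2 ζ, inv_mul_cancel]
    · apply Subtype.ext
      show χ₀.1 * (χ₀.1⁻¹ * χ.1) = χ.1
      group
  exact hsurj.connectedSpace hcont

end XC

theorem free_action {F Fbar : Type*} [Field F] [CharZero F] [Field Fbar]
    [Algebra F Fbar] [IsAlgClosure F Fbar]
    (hroots : ∀ n : ℕ, 0 < n → ∃ ζ : F, IsPrimitiveRoot ζ n)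
    (ι : (CommGroup.torsion Fbarˣ) →* Circle) (hι : Function.Injective ι)
    (σ : Fbar ≃ₐ[F] Fbar) (χ : XChar Fbar ι)
    (h : ∀ x : Fbarˣ, χ.1 (Units.map (σ : Fbar →* Fbar) x) = χ.1 x) : σ = 1 := by
  by_contra hσ
  obtain ⟨a, ha⟩ : ∃ a : Fbar, σ a ≠ a := by
    by_contra h'
    push_neg at h'
    exact hσ (AlgEquiv.ext h')
  haveI : Algebra.IsAlgebraic F Fbar := IsAlgClosure.isAlgebraic
  have hint : IsIntegral F a := Algebra.IsIntegral.isIntegral a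
  haveI : FiniteDimensional F F⟮a⟯ := IntermediateField.adjoin.finiteDimensional hint
  set L := normalClosure F F⟮a⟯ Fbar with hL
  haveI : FiniteDimensional F L := normalClosure.is_finiteDimensional F F⟮a⟯ Fbar
  haveI : Normal F L := normalClosure.normal F F⟮a⟯ Fbar
  set τ := σ.restrictNormal L with hτdef
  have haL : a ∈ L :=
    IntermediateField.le_normalClosure F⟮a⟯ (IntermediateField.mem_adjoin_simple_self F a)
  have hτa : algebraMap L Fbar (τ ⟨a, haL⟩) = σ a :=
    AlgEquiv.restrictNormal_commutes σ L ⟨a, haL⟩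
  have hτ : τ ≠ 1 := by
    intro h1
    apply ha
    rw [← hτa, h1]
    rfl
  have hfin : IsOfFinOrder τ := isOfFinOrder_of_finite τ
  set n := orderOf τ with hn
  have hn1 : n ≠ 1 := by simpa [hn, orderOf_eq_one_iff] using hτ
  have hn0 : 0 < n := hfin.orderOf_pos
  obtain ⟨ζ, hζ⟩ := hroots n hn0
  have hroot : (minpoly F τ.toLinearMap).IsRoot ζ := by
    rw [minpoly_algEquiv_toLinearMap τ hfin]
    simp [hζ.pow_eq_one, Polynomial.IsRoot, ← hn]
  obtain ⟨v, hv⟩ := (Module.End.hasEigenvalue_of_isRoot hroot).exists_hasEigenvector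
  have hτv : τ v = ζ • v := hv.apply_eq_smul
  set w : Fbar := algebraMap L Fbar v with hw
  have hw0 : w ≠ 0 := by
    intro hc
    apply hv.2
    apply (algebraMap L Fbar).injective
    rw [map_zero, ← hw]
    exact hc
  set ζF : Fbar := algebraMap F Fbar ζ with hζF
  have hζ' : IsPrimitiveRoot ζF n := hζ.map_of_injective (algebraMap F Fbar).injective
  have hσw : σ w = ζF * w := by
    rw [hw, ← AlgEquiv.restrictNormal_commutes σ L v, hτv, Algebra.smul_def, map_mul,
      ← IsScalarTower.algebraMap_apply]
  have hu : IsUnit ζF := hζ'.isUnit hn0.ne'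
  set x : Fbarˣ := Units.mk0 w hw0 with hx
  have hmap : Units.map (σ : Fbar →* Fbar) x = hu.unit * x := by
    ext
    simpa [hx] using hσw
  have hχu : χ.1 hu.unit = 1 := by
    have := h x
    rw [hmap, map_mul] at this
    exact mul_right_cancel (by rwa [one_mul])
  have hut : hu.unit ∈ CommGroup.torsion Fbarˣ := by
    rw [CommGroup.mem_torsion]
    apply isOfFinOrder_iff_pow_eq_one.mpr ⟨n, hn0, ?_⟩
    ext
    simpa using hζ'.pow_eq_one
  have h1 : ι ⟨hu.unit, hut⟩ = ι 1 := by
    rw [← χ.2 ⟨hu.unit, hut⟩, map_one]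
    exact hχu
  have : (⟨hu.unit, hut⟩ : CommGroup.torsion Fbarˣ) = 1 := hι h1
  have hζ1 : ζF = 1 := by
    have h2 : (⟨hu.unit, hut⟩ : CommGroup.torsion Fbarˣ).1.1 = ((1 : CommGroup.torsion Fbarˣ) : Fbarˣ).1 :=
      congrArg (fun z : CommGroup.torsion Fbarˣ => (z.1 : Fbar)) this
    simpa using h2
  have : n ∣ 1 := hζ'.dvd_of_pow_eq_one 1 (by rw [pow_one, hζ1])
  exact hn1 (Nat.dvd_one.mp this)


theorem exists_algEquiv_global {F Fbar : Type*} [Field F] [Field Fbar] [Algebra F Fbar]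
    [Algebra.IsAlgebraic F Fbar] (p : Fbarˣ → Fbarˣ → Prop)
    (h : ∀ s : Finset Fbarˣ, ∃ σ : Fbar ≃ₐ[F] Fbar,
      ∀ x ∈ s, p x (Units.map (σ : Fbar →* Fbar) x)) :
    ∃ σ : Fbar ≃ₐ[F] Fbar, ∀ x : Fbarˣ, p x (Units.map (σ : Fbar →* Fbar) x) := by
  choose sel hsel using h
  haveI : Nonempty (Finset Fbarˣ) := ⟨∅⟩
  let U : Ultrafilter (Finset Fbarˣ) := Ultrafilter.of Filter.atTop
  have hU : (U : Filter (Finset Fbarˣ)) ≤ Filter.atTop := Ultrafilter.of_le _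
  have hconj : ∀ (z : Fbar) (t : Finset Fbarˣ), Polynomial.aeval (sel t z) (minpoly F z) = 0 := by
    intro z t
    have h0 := Polynomial.aeval_algHom_apply ((sel t : Fbar ≃ₐ[F] Fbar) : Fbar →ₐ[F] Fbar) z (minpoly F z)
    rw [minpoly.aeval, map_zero] at h0
    simpa using h0
  have hval : ∀ z : Fbar, ∃ v : Fbar, {t : Finset Fbarˣ | sel t z = v} ∈ U := by
    intro z
    by_contra hc
    push_neg at hc
    have hint : IsIntegral F z := Algebra.IsIntegral.isIntegral z
    have hfin : {y : Fbar | Polynomial.aeval y (minpoly F z) = 0}.Finite := by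
      have hne : (minpoly F z).map (algebraMap F Fbar) ≠ 0 :=
        Polynomial.map_ne_zero (minpoly.ne_zero hint)
      have : {y : Fbar | Polynomial.aeval y (minpoly F z) = 0} =
          {y : Fbar | ((minpoly F z).map (algebraMap F Fbar)).IsRoot y} := by
        ext y
        simp [Polynomial.IsRoot, Polynomial.aeval_def, Polynomial.eval_map]
      rw [this]
      exact Polynomial.finite_setOf_isRoot hne
    have hcompl : (⋂ v ∈ {y : Fbar | Polynomial.aeval y (minpoly F z) = 0},
        {t : Finset Fbarˣ | sel t z = v}ᶜ) ∈ U :=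
      (Filter.biInter_mem hfin).mpr fun v _ =>
        Ultrafilter.compl_mem_iff_notMem.mpr (hc v)
    obtain ⟨t, ht⟩ := Ultrafilter.nonempty_of_mem hcompl
    rw [Set.mem_iInter₂] at ht
    exact ht (sel t z) (hconj z t) rfl
  choose φ hφ using hval
  have hkey : ∀ zs : Finset Fbar, ∃ t : Finset Fbarˣ, ∀ z ∈ zs, sel t z = φ z := by
    intro zs
    have hm : (⋂ z ∈ (zs : Set Fbar), {t : Finset Fbarˣ | sel t z = φ z}) ∈ U :=
      (Filter.biInter_mem zs.finite_toSet).mpr fun z _ => hφ z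
    obtain ⟨t, ht⟩ := Ultrafilter.nonempty_of_mem hm
    rw [Set.mem_iInter₂] at ht
    exact ⟨t, fun z hz => ht z hz⟩
  let ψ : Fbar →ₐ[F] Fbar :=
    { toFun := φ
      map_one' := by
        obtain ⟨t, ht⟩ := hkey {1}
        rw [← ht 1 (by simp), map_one]
      map_mul' := by
        intro a b
        obtain ⟨t, ht⟩ := hkey {a, b, a * b}
        show φ (a * b) = φ a * φ b
        rw [← ht a (by simp), ← ht b (by simp), ← ht (a * b) (by simp), map_mul]
      map_zero' := by
        obtain ⟨t, ht⟩ := hkey {0}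
        show φ 0 = 0
        rw [← ht 0 (by simp), map_zero]
      map_add' := by
        intro a b
        obtain ⟨t, ht⟩ := hkey {a, b, a + b}
        show φ (a + b) = φ a + φ b
        rw [← ht a (by simp), ← ht b (by simp), ← ht (a + b) (by simp), map_add]
      commutes' := by
        intro c
        obtain ⟨t, ht⟩ := hkey {algebraMap F Fbar c}
        show φ (algebraMap F Fbar c) = algebraMap F Fbar c
        rw [← ht _ (by simp), AlgEquiv.commutes] }
  have hbij : Function.Bijective ψ := Algebra.IsAlgebraic.algHom_bijective ψ
  refine ⟨AlgEquiv.ofBijective ψ hbij, fun x => ?_⟩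
  have hA : {t : Finset Fbarˣ | sel t (x : Fbar) = φ (x : Fbar)} ∈ U := hφ _
  have hB : {t : Finset Fbarˣ | x ∈ t} ∈ U := by
    apply hU
    exact Filter.mem_of_superset (Filter.mem_atTop {x}) fun t ht => by
      simpa using ht (Finset.mem_singleton_self x)
  obtain ⟨t, htA, htB⟩ := Ultrafilter.nonempty_of_mem (Filter.inter_mem hA hB)
  have heq : Units.map ((AlgEquiv.ofBijective ψ hbij : Fbar ≃ₐ[F] Fbar) : Fbar →* Fbar) x
      = Units.map ((sel t : Fbar ≃ₐ[F] Fbar) : Fbar →* Fbar) x := by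
    ext
    show ψ (x : Fbar) = sel t (x : Fbar)
    rw [htA]
    rfl
  rw [heq]
  exact hsel t x htB


lemma units_map_torsion_fixed {F Fbar : Type*} [Field F] [Field Fbar] [Algebra F Fbar]
    (hroots : ∀ n : ℕ, 0 < n → ∃ ζ : F, IsPrimitiveRoot ζ n)
    (σ : Fbar ≃ₐ[F] Fbar) (u : Fbarˣ) (hu : u ∈ CommGroup.torsion Fbarˣ) :
    Units.map (σ : Fbar →* Fbar) u = u := by
  obtain ⟨m, hm, hum⟩ := isOfFinOrder_iff_pow_eq_one.mp ((CommGroup.mem_torsion _).mp hu)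
  haveI : NeZero m := ⟨hm.ne'⟩
  obtain ⟨ζ, hζ⟩ := hroots m hm
  have hζ' : IsPrimitiveRoot (algebraMap F Fbar ζ) m :=
    hζ.map_of_injective (algebraMap F Fbar).injective
  have hpow : (u : Fbar) ^ m = 1 := by
    have := congrArg (Units.val) hum
    simpa using this
  obtain ⟨i, _, hi⟩ := hζ'.eq_pow_of_pow_eq_one hpow
  ext
  show σ (u : Fbar) = (u : Fbar)
  rw [← hi, map_pow, AlgEquiv.commutes]

/-- Let `F` be a field of characteristic `0` containing all roots of unity, with algebraic
closure `F̄`, and fix an injective character `ι : μ∞ → S¹`.  Then `X_F̄` is a nonempty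
connected compact Hausdorff space, the action of `Gal(F̄/F)` on it (by `σ • χ = χ ∘ σ⁻¹`)
is free, and the quotient `X_F = Gal(F̄/F)\X_F̄` is a nonempty connected compact
Hausdorff space. -/
theorem XF_connected_compact_hausdorff (F Fbar : Type*) [Field F] [CharZero F] [Field Fbar]
    [Algebra F Fbar] [IsAlgClosure F Fbar]
    (hroots : ∀ n : ℕ, 0 < n → ∃ ζ : F, IsPrimitiveRoot ζ n)
    (ι : (CommGroup.torsion Fbarˣ) →* Circle) (hι : Function.Injective ι) :
    Nonempty (XChar Fbar ι) ∧ CompactSpace (XChar Fbar ι) ∧ T2Space (XChar Fbar ι) ∧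
      ConnectedSpace (XChar Fbar ι) ∧
      (∀ (σ : Fbar ≃ₐ[F] Fbar) (χ : XChar Fbar ι),
        (∀ x : Fbarˣ, χ.1 (Units.map (σ : Fbar →* Fbar) x) = χ.1 x) → σ = 1) ∧
      (Nonempty (XF F Fbar ι) ∧ ConnectedSpace (XF F Fbar ι) ∧
        CompactSpace (XF F Fbar ι) ∧ T2Space (XF F Fbar ι)) := by
  haveI : Algebra.IsAlgebraic F Fbar := IsAlgClosure.isAlgebraic
  haveI : IsAlgClosed Fbar := IsAlgClosure.isAlgClosed F
  obtain ⟨χ₀h, hχ₀⟩ := exists_monoidHom_extension (CommGroup.torsion Fbarˣ) ι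
  have hne : Nonempty (XChar Fbar ι) := ⟨⟨χ₀h, fun ζ => hχ₀ ζ⟩⟩
  have hconn := connectedSpace_xchar ι hne
  refine ⟨hne, inferInstance, inferInstance, hconn, ?_, ?_⟩
  · intro σ χ hfix
    exact free_action hroots ι hι σ χ (fun x => hfix x)
  · letI sd : Setoid (XChar Fbar ι) := galSetoid F Fbar ι
    have hq : Function.Surjective (Quotient.mk' : XChar Fbar ι → XF F Fbar ι) :=
      fun c => Quotient.inductionOn' c (fun χ => ⟨χ, rfl⟩)
    have hqc : Continuous (Quotient.mk' : XChar Fbar ι → XF F Fbar ι) :=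
      continuous_quotient_mk'
    have hXFne : Nonempty (XF F Fbar ι) := ⟨Quotient.mk' hne.some⟩
    have hXFconn : ConnectedSpace (XF F Fbar ι) := hq.connectedSpace hqc
    have hXFcomp : CompactSpace (XF F Fbar ι) := ⟨by
      have hrc := isCompact_range hqc
      rw [hq.range_eq] at hrc
      exact hrc⟩
    refine ⟨hXFne, hXFconn, hXFcomp, ?_⟩
    set act : (Fbar ≃ₐ[F] Fbar) → XChar Fbar ι → XChar Fbar ι := fun σ χ =>
      ⟨χ.1.comp (Units.map (σ : Fbar →* Fbar)), fun ζ => by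
        show χ.1 (Units.map (σ : Fbar →* Fbar) ζ) = ι ζ
        rw [units_map_torsion_fixed hroots σ ζ.1 ζ.2, χ.2]⟩ with hact
    have hactcont : ∀ σ, Continuous (act σ) := by
      intro σ
      apply Continuous.subtype_mk
      apply continuous_induced_rng.2
      exact continuous_pi fun x =>
        (charEval_continuous (Units.map (σ : Fbar →* Fbar) x)).comp continuous_subtype_val
    have hmapmap : ∀ (σ : Fbar ≃ₐ[F] Fbar) (x : Fbarˣ),
        Units.map (σ : Fbar →* Fbar)
          (Units.map ((σ.symm : Fbar ≃ₐ[F] Fbar) : Fbar →* Fbar) x) = x := by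
      intro σ x
      ext
      simp
    set R : Set (XChar Fbar ι × XChar Fbar ι) := {p | sd.r p.1 p.2} with hR
    have hRclosed : IsClosed R := by
      apply isClosed_of_closure_subset
      rintro ⟨χ₁, χ₂⟩ hp
      have hfinstep : ∀ s : Finset Fbarˣ, ∃ σ : Fbar ≃ₐ[F] Fbar,
          ∀ x ∈ s, χ₂.1 x = χ₁.1 (Units.map (σ : Fbar →* Fbar) x) := by
        intro s
        have hconjfin : ∀ x : Fbarˣ,
            {y : Fbarˣ | Polynomial.aeval (y : Fbar) (minpoly F (x : Fbar)) = 0}.Finite := by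
          intro x
          have hint : IsIntegral F (x : Fbar) := Algebra.IsIntegral.isIntegral _
          have hne0 : (minpoly F (x : Fbar)).map (algebraMap F Fbar) ≠ 0 :=
            Polynomial.map_ne_zero (minpoly.ne_zero hint)
          have hsub : {y : Fbarˣ | Polynomial.aeval (y : Fbar) (minpoly F (x : Fbar)) = 0}
              ⊆ (Units.val) ⁻¹'
                {z : Fbar | ((minpoly F (x : Fbar)).map (algebraMap F Fbar)).IsRoot z} := by
            intro y hy
            simp only [Set.mem_preimage, Set.mem_setOf_eq, Polynomial.IsRoot] at *
            rw [Polynomial.eval_map, ← Polynomial.aeval_def]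
            exact hy
          exact Set.Finite.subset
            (Set.Finite.preimage (fun _ _ _ _ h => Units.val_injective h) (Polynomial.finite_setOf_isRoot hne0)) hsub
        set P : Set (Fbarˣ × Fbarˣ) := {p | p.1 ∈ s ∧
          Polynomial.aeval ((p.2 : Fbar)) (minpoly F (p.1 : Fbar)) = 0 ∧
          χ₂.1 p.1 ≠ χ₁.1 p.2} with hP
        have hPfin : P.Finite := by
          apply Set.Finite.subset (Set.Finite.biUnion s.finite_toSet
            (fun x _ => (Set.finite_singleton x).prod (hconjfin x)))
          rintro ⟨x, y⟩ ⟨hx, hy, _⟩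
          exact Set.mem_biUnion hx ⟨rfl, hy⟩
        have hsep : ∀ p : Fbarˣ × Fbarˣ, ∃ AB : Set Circle × Set Circle,
            IsOpen AB.1 ∧ IsOpen AB.2 ∧ (χ₂.1 p.1 ≠ χ₁.1 p.2 →
              χ₂.1 p.1 ∈ AB.1 ∧ χ₁.1 p.2 ∈ AB.2 ∧ Disjoint AB.1 AB.2) := by
          intro p
          by_cases hne2 : χ₂.1 p.1 ≠ χ₁.1 p.2
          · obtain ⟨A, B, hA, hB, hmA, hmB, hd⟩ := t2_separation hne2
            exact ⟨⟨A, B⟩, hA, hB, fun _ => ⟨hmA, hmB, hd⟩⟩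
          · exact ⟨⟨Set.univ, Set.univ⟩, isOpen_univ, isOpen_univ, fun h => absurd h hne2⟩
        choose AB hA hB hABd using hsep
        set N : Set (XChar Fbar ι × XChar Fbar ι) :=
          ⋂ p ∈ P, ({q : XChar Fbar ι × XChar Fbar ι | q.2.1 p.1 ∈ (AB p).1} ∩
            {q : XChar Fbar ι × XChar Fbar ι | q.1.1 p.2 ∈ (AB p).2}) with hN
        have hNopen : IsOpen N := by
          apply Set.Finite.isOpen_biInter hPfin
          intro p hp2
          apply IsOpen.inter
          · exact (hA p).preimage
              ((charEval_continuous p.1).comp (continuous_subtype_val.comp continuous_snd))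
          · exact (hB p).preimage
              ((charEval_continuous p.2).comp (continuous_subtype_val.comp continuous_fst))
        have hNmem : (χ₁, χ₂) ∈ N := by
          rw [hN, Set.mem_iInter₂]
          intro p hp2
          obtain ⟨h1, h2, _⟩ := hABd p hp2.2.2
          exact ⟨h1, h2⟩
        obtain ⟨⟨ψ₁, ψ₂⟩, hψN, hψR⟩ := _root_.mem_closure_iff.mp hp N hNopen hNmem
        obtain ⟨σ, hσ⟩ := hψR
        refine ⟨σ, fun x hx => ?_⟩
        by_contra hneq
        have hyconj : Polynomial.aeval
            ((Units.map (σ : Fbar →* Fbar) x : Fbarˣ) : Fbar) (minpoly F (x : Fbar)) = 0 := by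
          show Polynomial.aeval (σ (x : Fbar)) _ = 0
          have h0 := Polynomial.aeval_algHom_apply
            ((σ : Fbar ≃ₐ[F] Fbar) : Fbar →ₐ[F] Fbar) (x : Fbar) (minpoly F (x : Fbar))
          rw [minpoly.aeval, map_zero] at h0
          simpa using h0
        have hpP : (x, Units.map (σ : Fbar →* Fbar) x) ∈ P := ⟨hx, hyconj, hneq⟩
        obtain ⟨hqA, hqB⟩ := (Set.mem_iInter₂.mp hψN) _ hpP
        obtain ⟨_, _, hd⟩ := hABd (x, Units.map (σ : Fbar →* Fbar) x) hneq
        have hev := hσ x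
        exact Set.disjoint_left.mp hd hqA (by rw [hev]; exact hqB)
      obtain ⟨σ, hσall⟩ := exists_algEquiv_global
        (fun x y => χ₂.1 x = χ₁.1 y) hfinstep
      exact ⟨σ, hσall⟩
    have hopen : ∀ U : Set (XChar Fbar ι), IsOpen U →
        IsOpen ((Quotient.mk' : _ → XF F Fbar ι) '' U) := by
      intro U hU
      rw [← isQuotientMap_quotient_mk'.isOpen_preimage]
      have heq2 : (Quotient.mk' : _ → XF F Fbar ι) ⁻¹' (Quotient.mk' '' U) =
          ⋃ σ : Fbar ≃ₐ[F] Fbar, (act σ) ⁻¹' U := by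
        ext χ
        simp only [Set.mem_preimage, Set.mem_image, Set.mem_iUnion]
        constructor
        · rintro ⟨χ', hχ'U, hqe⟩
          obtain ⟨σ, hσ⟩ := (Quotient.exact' hqe : sd.r χ' χ)
          refine ⟨σ.symm, ?_⟩
          have heq3 : act σ.symm χ = χ' := by
            refine Subtype.ext (MonoidHom.ext fun x => ?_)
            show χ.1 (Units.map ((σ.symm : Fbar ≃ₐ[F] Fbar) : Fbar →* Fbar) x) = χ'.1 x
            rw [hσ (Units.map ((σ.symm : Fbar ≃ₐ[F] Fbar) : Fbar →* Fbar) x), hmapmap σ x]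
          show act σ.symm χ ∈ U
          rw [heq3]
          exact hχ'U
        · rintro ⟨σ, hσU⟩
          refine ⟨act σ χ, hσU, Quotient.sound' ⟨σ.symm, fun x => ?_⟩⟩
          show χ.1 x = χ.1 (Units.map (σ : Fbar →* Fbar)
            (Units.map ((σ.symm : Fbar ≃ₐ[F] Fbar) : Fbar →* Fbar) x))
          rw [hmapmap σ x]
      rw [heq2]
      exact isOpen_iUnion fun σ => hU.preimage (hactcont σ)
    refine ⟨fun a b hab => ?_⟩
    obtain ⟨χ₁, rfl⟩ := hq a
    obtain ⟨χ₂, rfl⟩ := hq b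
    have hco : (χ₁, χ₂) ∈ Rᶜ := fun hr => hab (Quotient.sound' hr)
    obtain ⟨Uo, Vo, hUo, hVo, hmU, hmV, hsub⟩ :=
      isOpen_prod_iff.mp hRclosed.isOpen_compl χ₁ χ₂ hco
    refine ⟨Quotient.mk' '' Uo, Quotient.mk' '' Vo, hopen _ hUo, hopen _ hVo,
      ⟨χ₁, hmU, rfl⟩, ⟨χ₂, hmV, rfl⟩, ?_⟩
    rw [Set.disjoint_left]
    rintro c ⟨u, huU, hqu⟩ ⟨v, hvV, hqv⟩
    exact (hsub (Set.mk_mem_prod huU hvV)) (Quotient.exact' (hqu.trans hqv.symm))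

end
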